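/- Let (Ξ, Ξ^∞) be a countable approximate group, (Λ, Λ^∞) an approximate group, and ρ_{k+1}: Ξ^{k+1} → Λ^{k+1} a (k+1)-local morphism with ρ(Ξ) = Λ, for some k ≥ 2. Fix a left-invariant proper metric d on Ξ^∞. Then there exists R > 0 such that for all j = 2, …, k: ker₂(ρ_{k+1}) ⊆ ker_j(ρ_{k+1}) ⊆ N_R(ker₂(ρ_{k+1})), where ker_j(ρ_{k+1}) := ρ_{k+1}⁻¹(e) ∩ Ξʲ. -/
import Mathlib

open Pointwise

/-- An approximate subgroup of a group. -/
def IsApproxSubgroup {G : Type*} [Group G] (A : Set G) : Prop :=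
  A⁻¹ = A ∧ (1 : G) ∈ A ∧ ∃ F : Set G, F.Finite ∧ A * A ⊆ A * F

/-- For a `(k+1)`-local morphism `ρ` of countable approximate groups with `ρ(Ξ) = Λ` and
`k ≥ 2`, there is `R > 0` such that `ker₂(ρ) ⊆ ker_j(ρ) ⊆ N_R(ker₂(ρ))` for `j = 2, …, k`. -/
theorem partial_kernels_coarsely_equivalent {G H : Type*} [Group G] [Group H]
    [Countable G]
    (X : Set G) (L : Set H) (hX : IsApproxSubgroup X) (hL : IsApproxSubgroup L)
    (k : ℕ) (hk : 2 ≤ k)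
    (ρ : G → H)
    (hhom : ∀ a ∈ X ^ (k + 1), ∀ b ∈ X ^ (k + 1), a * b ∈ X ^ (k + 1) →
      ρ (a * b) = ρ a * ρ b)
    (himg : ρ '' X = L)
    (d : G → G → ℝ)
    (hdeq : ∀ x y, d x y = 0 ↔ x = y) (hdsymm : ∀ x y, d x y = d y x)
    (hdtri : ∀ x y z, d x z ≤ d x y + d y z)
    (hdinv : ∀ g x y, d (g * x) (g * y) = d x y)
    (hdproper : ∀ r : ℝ, {g : G | d 1 g ≤ r}.Finite) :
    ∃ R : ℝ, 0 < R ∧ ∀ j : ℕ, 2 ≤ j → j ≤ k →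
      ({g : G | ρ g = 1} ∩ X ^ 2 ⊆ {g : G | ρ g = 1} ∩ X ^ j) ∧
      ∀ x ∈ {g : G | ρ g = 1} ∩ X ^ j, ∃ y ∈ {g : G | ρ g = 1} ∩ X ^ 2, d y x < R := by
  obtain ⟨hXinv, hX1, F, hFfin, hFcov⟩ := hX
  obtain ⟨hLinv, hL1, -⟩ := hL
  -- membership in big power
  have hmem : ∀ {j : ℕ}, j ≤ k + 1 → ∀ {x : G}, x ∈ X ^ j → x ∈ X ^ (k + 1) := by
    intro j hj x hx
    exact Set.pow_subset_pow_right hX1 hj hx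
  -- F₁ := F ∪ {1}
  set F₁ : Set G := F ∪ {1} with hF₁
  have hF₁fin : F₁.Finite := hFfin.union (Set.finite_singleton 1)
  have hF₁1 : (1 : G) ∈ F₁ := Or.inr rfl
  have hcov : ∀ j : ℕ, 1 ≤ j → X ^ j ⊆ X * F₁ ^ (j - 1) := by
    intro j hj
    induction j with
    | zero => omega
    | succ n ih =>
      rcases Nat.eq_or_lt_of_le hj with h1 | h1
      · simp [← h1]
      · have hn : 1 ≤ n := by omega
        calc X ^ (n + 1) = X * X ^ n := by rw [pow_succ']
          _ ⊆ X * (X * F₁ ^ (n - 1)) := Set.mul_subset_mul_left (ih hn)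
          _ = (X * X) * F₁ ^ (n - 1) := by rw [mul_assoc]
          _ ⊆ (X * F₁) * F₁ ^ (n - 1) := by
              refine Set.mul_subset_mul_right ?_
              exact hFcov.trans (Set.mul_subset_mul_left (Set.subset_union_left))
          _ = X * (F₁ * F₁ ^ (n - 1)) := by rw [mul_assoc]
          _ = X * F₁ ^ n := by rw [← pow_succ']; congr 2; omega
  -- the finite set of correctors
  set S : Set G := F₁ ^ (k - 1) ∩ X ^ (k + 1) with hS
  have hpowfin : ∀ n : ℕ, (F₁ ^ n).Finite := by
    intro n
    induction n with
    | zero => simp [Set.finite_one]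
    | succ m ih => rw [pow_succ]; exact ih.mul hF₁fin
  have hSfin : S.Finite := (hpowfin (k - 1)).inter_of_left _
  -- choice of section
  have hsec : ∀ l ∈ L, ∃ t ∈ X, ρ t = l := by
    intro l hl
    rw [← himg] at hl
    obtain ⟨t, ht, h⟩ := hl
    exact ⟨t, ht, h⟩
  classical
  choose! t ht hρt using hsec
  -- distance bound
  have hSimg : ((fun f => d (t (ρ f)) f) '' S).Finite := hSfin.image _
  obtain ⟨B, hB⟩ := hSimg.bddAbove
  refine ⟨max B 0 + 1, by positivity, fun j hj2 hjk => ?_⟩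
  constructor
  · refine Set.inter_subset_inter_right _ ?_
    exact Set.pow_subset_pow_right hX1 hj2
  · rintro x ⟨hρx, hxj⟩
    have hρx1 : ρ x = 1 := hρx
    obtain ⟨y, hy, f, hf, hxyf0⟩ := hcov j (by omega) (by exact hxj)
    have hxyf : y * f = x := hxyf0
    subst hxyf
    have hf' : f ∈ F₁ ^ (k - 1) := Set.pow_subset_pow_right hF₁1 (by omega) hf
    have hy1 : y ∈ X ^ 1 := by simpa using hy
    have hfX : f ∈ X ^ (k + 1) := by
      have heq : f = y⁻¹ * (y * f) := by group
      rw [heq]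
      have hy' : y⁻¹ ∈ X := by rw [← hXinv]; exact Set.inv_mem_inv.mpr hy
      have h2 : y⁻¹ * (y * f) ∈ X ^ 1 * X ^ j :=
        Set.mul_mem_mul (by simpa using hy') hxj
      rw [← pow_add] at h2
      exact hmem (show 1 + j ≤ k + 1 by omega) h2
    have hfS : f ∈ S := ⟨hf', hfX⟩
    have hyK : y ∈ X ^ (k + 1) := hmem (show 1 ≤ k + 1 by omega) hy1
    have hxmem : y * f ∈ X ^ (k + 1) := hmem (show j ≤ k + 1 by omega) hxj
    have hρxf : ρ (y * f) = ρ y * ρ f := hhom y hyK f hfX hxmem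
    have hρyL : ρ y ∈ L := by rw [← himg]; exact ⟨y, hy, rfl⟩
    have hρfL : ρ f ∈ L := by
      have h1 : ρ y * ρ f = 1 := by rw [← hρxf, hρx1]
      have h2 : ρ f = (ρ y)⁻¹ := (mul_eq_one_iff_inv_eq.mp h1).symm
      rw [h2, ← hLinv]
      exact Set.inv_mem_inv.mpr hρyL
    have htX : t (ρ f) ∈ X := ht _ hρfL
    have hρtf : ρ (t (ρ f)) = ρ f := hρt _ hρfL
    refine ⟨y * t (ρ f), ⟨?_, ?_⟩, ?_⟩
    · show ρ (y * t (ρ f)) = 1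
      have hmul : y * t (ρ f) ∈ X ^ (k + 1) := by
        have h3 : y * t (ρ f) ∈ X ^ 1 * X ^ 1 :=
          Set.mul_mem_mul hy1 (by simpa using htX)
        rw [← pow_add] at h3
        exact hmem (show 1 + 1 ≤ k + 1 by omega) h3
      rw [hhom y hyK (t (ρ f)) (hmem (show 1 ≤ k + 1 by omega) (by simpa using htX)) hmul,
        hρtf, ← hρxf, hρx1]
    · rw [pow_two]; exact Set.mul_mem_mul hy htX
    · rw [hdinv]
      have hle : d (t (ρ f)) f ≤ B := hB ⟨f, hfS, rfl⟩
      calc d (t (ρ f)) f ≤ B := hle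
        _ ≤ max B 0 := le_max_left _ _
        _ < max B 0 + 1 := by linarith
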